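/- Under the setup of the previous statement, the bias admits the bound |E[T] − aᵀ Σ^{-1} b| ≤ ‖Σ̂^{-1}‖² ‖Σ^{-1}‖ ‖Σ̂ − Σ‖² ‖a‖ ‖b‖, where ‖·‖ denotes the operator norm for matrices and Euclidean norm for vectors. -/

import Mathlib

open MeasureTheory ProbabilityTheory Matrix

lemma aux_triple {Ω α : Type*} [MeasurableSpace Ω] [MeasurableSpace α]
    (μ : Measure Ω) [IsProbabilityMeasure μ] {n : ℕ}
    (O : Fin n → Ω → α) (hOmeas : ∀ i, Measurable (O i))
    (hindep : iIndepFun O μ)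
    {i j l : Fin n} (hij : i ≠ j) (hil : i ≠ l) (hjl : j ≠ l)
    (f g h : α → ℝ) (hf : Measurable f) (hg : Measurable g) (hh : Measurable h)
    (hfi : Integrable (fun ω => f (O i ω)) μ) (hgi : Integrable (fun ω => g (O j ω)) μ)
    (hhi : Integrable (fun ω => h (O l ω)) μ) :
    ∫ ω, f (O i ω) * g (O j ω) * h (O l ω) ∂μ =
      (∫ ω, f (O i ω) ∂μ) * (∫ ω, g (O j ω) ∂μ) * (∫ ω, h (O l ω) ∂μ) := by
  have Ifg : IndepFun (fun ω => f (O i ω)) (fun ω => g (O j ω)) μ :=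
    (hindep.indepFun hij).comp hf hg
  have hpair : IndepFun (fun ω => (O i ω, O j ω)) (O l) μ :=
    hindep.indepFun_prodMk hOmeas i j l hil hjl
  have Iprod : IndepFun (fun ω => f (O i ω) * g (O j ω)) (fun ω => h (O l ω)) μ :=
    hpair.comp ((hf.comp measurable_fst).mul (hg.comp measurable_snd)) hh
  have hint : Integrable (fun ω => f (O i ω) * g (O j ω)) μ :=
    Ifg.integrable_mul hfi hgi
  calc ∫ ω, f (O i ω) * g (O j ω) * h (O l ω) ∂μ
      = (∫ ω, f (O i ω) * g (O j ω) ∂μ) * ∫ ω, h (O l ω) ∂μ :=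
        by exact Iprod.integral_mul_eq_mul_integral hint.aestronglyMeasurable hhi.aestronglyMeasurable
    _ = _ := congrArg (· * _) (by exact Ifg.integral_mul_eq_mul_integral hfi.aestronglyMeasurable hgi.aestronglyMeasurable)

lemma aux_bilin {Ω α : Type*} [MeasurableSpace Ω] [MeasurableSpace α]
    (μ : Measure Ω) [IsProbabilityMeasure μ] {n k : ℕ}
    (O : Fin n → Ω → α) (hOmeas : ∀ i, Measurable (O i))
    (hindep : iIndepFun O μ)
    {i j l : Fin n} (hij : i ≠ j) (hil : i ≠ l) (hjl : j ≠ l)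
    (u v : α → Fin k → ℝ)
    (hu : ∀ r, Measurable fun x => u x r) (hv : ∀ r, Measurable fun x => v x r)
    (hui : ∀ r, Integrable (fun ω => u (O i ω) r) μ)
    (hvi : ∀ r, Integrable (fun ω => v (O j ω) r) μ)
    (a b : Fin k → ℝ)
    (ha : ∀ r, ∫ ω, u (O i ω) r ∂μ = a r) (hb : ∀ r, ∫ ω, v (O j ω) r ∂μ = b r)
    (R : α → Matrix (Fin k) (Fin k) ℝ)
    (hRmeas : ∀ r s, Measurable fun x => R x r s)
    (hRint : ∀ r s, Integrable (fun ω => R (O l ω) r s) μ)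
    (Rbar : Matrix (Fin k) (Fin k) ℝ) (hRbar : ∀ r s, ∫ ω, R (O l ω) r s ∂μ = Rbar r s) :
    ∫ ω, u (O i ω) ⬝ᵥ (R (O l ω)).mulVec (v (O j ω)) ∂μ = a ⬝ᵥ Rbar.mulVec b := by
  have hint : ∀ r s : Fin k,
      Integrable (fun ω => u (O i ω) r * v (O j ω) s * R (O l ω) r s) μ := by
    intro r s
    have I1 : IndepFun (fun ω => u (O i ω) r) (fun ω => v (O j ω) s) μ :=
      (hindep.indepFun hij).comp (hu r) (hv s)
    have I2 : IndepFun (fun ω => u (O i ω) r * v (O j ω) s) (fun ω => R (O l ω) r s) μ :=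
      (hindep.indepFun_prodMk hOmeas i j l hil hjl).comp
        (((hu r).comp measurable_fst).mul ((hv s).comp measurable_snd)) (hRmeas r s)
    exact I2.integrable_mul (I1.integrable_mul (hui r) (hvi s)) (hRint r s)
  have hexp : ∀ ω, u (O i ω) ⬝ᵥ (R (O l ω)).mulVec (v (O j ω)) =
      ∑ r, ∑ s, u (O i ω) r * v (O j ω) s * R (O l ω) r s := by
    intro ω
    simp only [dotProduct, mulVec, Finset.mul_sum]
    exact Finset.sum_congr rfl fun r _ => Finset.sum_congr rfl fun s _ => by ring
  simp_rw [hexp]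
  rw [integral_finset_sum _ fun r _ => integrable_finset_sum _ fun s _ => hint r s]
  have hterm : ∀ r s : Fin k, ∫ ω, u (O i ω) r * v (O j ω) s * R (O l ω) r s ∂μ =
      a r * b s * Rbar r s := by
    intro r s
    have I1 : IndepFun (fun ω => u (O i ω) r) (fun ω => v (O j ω) s) μ :=
      (hindep.indepFun hij).comp (hu r) (hv s)
    rw [aux_triple μ O hOmeas hindep hij hil hjl _ _ _ (hu r) (hv s) (hRmeas r s)
      (hui r) (hvi s) (hRint r s), ha, hb, hRbar]
  calc ∑ r, ∫ ω, ∑ s, u (O i ω) r * v (O j ω) s * R (O l ω) r s ∂μ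
      = ∑ r, ∑ s, a r * b s * Rbar r s := by
        refine Finset.sum_congr rfl fun r _ => ?_
        rw [integral_finset_sum _ fun s _ => hint r s]
        exact Finset.sum_congr rfl fun s _ => hterm r s
    _ = a ⬝ᵥ Rbar.mulVec b := by
        simp only [dotProduct, mulVec, Finset.mul_sum]
        exact Finset.sum_congr rfl fun r _ => Finset.sum_congr rfl fun s _ => by ring
lemma aux_alg {k : ℕ} (Sig Shat : Matrix (Fin k) (Fin k) ℝ)
    (h1 : Sig⁻¹ * Sig = 1) (h2 : Sig * Sig⁻¹ = 1)
    (h3 : Shat⁻¹ * Shat = 1) (h4 : Shat * Shat⁻¹ = 1) :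
    (Shat⁻¹ - Shat⁻¹ * (Sig - Shat) * Shat⁻¹) - Sig⁻¹ =
      -(Sig⁻¹ * (Shat - Sig) * Shat⁻¹ * (Shat - Sig) * Shat⁻¹) := by
  have c1 : ∀ X : Matrix (Fin k) (Fin k) ℝ, Sig⁻¹ * (Sig * X) = X := fun X => by
    rw [← Matrix.mul_assoc, h1, Matrix.one_mul]
  have c2 : ∀ X : Matrix (Fin k) (Fin k) ℝ, Sig * (Sig⁻¹ * X) = X := fun X => by
    rw [← Matrix.mul_assoc, h2, Matrix.one_mul]
  have c3 : ∀ X : Matrix (Fin k) (Fin k) ℝ, Shat⁻¹ * (Shat * X) = X := fun X => by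
    rw [← Matrix.mul_assoc, h3, Matrix.one_mul]
  have c4 : ∀ X : Matrix (Fin k) (Fin k) ℝ, Shat * (Shat⁻¹ * X) = X := fun X => by
    rw [← Matrix.mul_assoc, h4, Matrix.one_mul]
  simp only [Matrix.mul_sub, Matrix.sub_mul, Matrix.mul_assoc, c1, c2, c3, c4,
    h1, h2, h3, h4, Matrix.mul_one, Matrix.one_mul]
  abel

lemma aux_opnorm {k : ℕ} (N : Matrix (Fin k) (Fin k) ℝ) (a b : Fin k → ℝ) :
    |a ⬝ᵥ N.mulVec b| ≤ ‖Matrix.toEuclideanCLM (𝕜 := ℝ) N‖ *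
      ‖(WithLp.equiv 2 (Fin k → ℝ)).symm a‖ * ‖(WithLp.equiv 2 (Fin k → ℝ)).symm b‖ := by
  set a' := (WithLp.equiv 2 (Fin k → ℝ)).symm a with ha'
  set b' := (WithLp.equiv 2 (Fin k → ℝ)).symm b with hb'
  have hinner : a ⬝ᵥ N.mulVec b = inner (𝕜 := ℝ) a' (Matrix.toEuclideanCLM (𝕜 := ℝ) N b') := by
    rw [hb']
    simp [PiLp.inner_apply, dotProduct, RCLike.inner_apply, ha', mul_comm]
  rw [hinner]
  calc |inner (𝕜 := ℝ) a' (Matrix.toEuclideanCLM (𝕜 := ℝ) N b')|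
      ≤ ‖a'‖ * ‖Matrix.toEuclideanCLM (𝕜 := ℝ) N b'‖ := abs_real_inner_le_norm _ _
    _ ≤ ‖a'‖ * (‖Matrix.toEuclideanCLM (𝕜 := ℝ) N‖ * ‖b'‖) :=
        mul_le_mul_of_nonneg_left ((Matrix.toEuclideanCLM (𝕜 := ℝ) N).le_opNorm _)
          (norm_nonneg _)
    _ = _ := by ring

lemma aux_card {n : ℕ} :
    (Finset.univ.filter
      (fun p : Fin n × Fin n × Fin n => p.1 ≠ p.2.1 ∧ p.1 ≠ p.2.2 ∧ p.2.1 ≠ p.2.2)).card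
      = n * ((n - 1) * (n - 2)) := by
  classical
  rw [Finset.card_filter, Fintype.sum_prod_type]
  simp_rw [Fintype.sum_prod_type]
  have key : ∀ i j : Fin n, i ≠ j →
      (Finset.univ.filter fun l => i ≠ l ∧ j ≠ l).card = n - 2 := by
    intro i j hij
    have he : (Finset.univ.filter fun l => i ≠ l ∧ j ≠ l) = Finset.univ \ {i, j} := by
      ext l
      simp [ne_comm, and_comm, eq_comm]
    rw [he, Finset.card_sdiff_of_subset (Finset.subset_univ _), Finset.card_univ, Fintype.card_fin,
      Finset.card_insert_of_notMem (by simp [hij]), Finset.card_singleton]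
  have hin : ∀ i j : Fin n,
      (∑ l, if i ≠ j ∧ i ≠ l ∧ j ≠ l then 1 else 0) = if i ≠ j then n - 2 else 0 := by
    intro i j
    by_cases hij : i = j
    · simp [hij]
    · simp only [hij, Ne, not_false_iff, true_and, if_true]
      rw [← key i j hij, Finset.card_filter]
  simp_rw [hin]
  have hout : ∀ i : Fin n, (∑ j, if i ≠ j then n - 2 else 0) = (n - 1) * (n - 2) := by
    intro i
    rw [Finset.sum_ite, Finset.sum_const, Finset.sum_const, smul_eq_mul, smul_eq_mul,
      mul_zero, add_zero]
    congr 1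
    have he : (Finset.univ.filter fun j => i ≠ j) = Finset.univ \ {i} := by
      ext j; simp [eq_comm]
    rw [he, Finset.card_sdiff_of_subset (Finset.subset_univ _), Finset.card_univ, Fintype.card_fin,
      Finset.card_singleton]
  simp_rw [hout]
  simp [Finset.sum_const]

lemma aux_fact {m : ℕ} :
    (Nat.factorial m : ℝ) / (Nat.factorial (m + 3) : ℝ) *
      ((m + 3) * (((m + 3) - 1) * ((m + 3) - 2)) : ℕ) = 1 := by
  have e1 : m + 3 - 1 = m + 2 := by omega
  have e2 : m + 3 - 2 = m + 1 := by omega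
  have h : Nat.factorial (m + 3) = Nat.factorial m * ((m + 3) * ((m + 2) * (m + 1))) := by
    simp [Nat.factorial_succ]; ring
  rw [e1, e2, h]
  have hm : (Nat.factorial m : ℝ) ≠ 0 := Nat.cast_ne_zero.mpr (Nat.factorial_ne_zero m)
  push_cast
  field_simp


lemma aux_bilin_int {Ω α : Type*} [MeasurableSpace Ω] [MeasurableSpace α]
    (μ : Measure Ω) [IsProbabilityMeasure μ] {n k : ℕ}
    (O : Fin n → Ω → α) (hOmeas : ∀ i, Measurable (O i))
    (hindep : iIndepFun O μ)
    {i j l : Fin n} (hij : i ≠ j) (hil : i ≠ l) (hjl : j ≠ l)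
    (u v : α → Fin k → ℝ)
    (hu : ∀ r, Measurable fun x => u x r) (hv : ∀ r, Measurable fun x => v x r)
    (hui : ∀ r, Integrable (fun ω => u (O i ω) r) μ)
    (hvi : ∀ r, Integrable (fun ω => v (O j ω) r) μ)
    (R : α → Matrix (Fin k) (Fin k) ℝ)
    (hRmeas : ∀ r s, Measurable fun x => R x r s)
    (hRint : ∀ r s, Integrable (fun ω => R (O l ω) r s) μ) :
    Integrable (fun ω => u (O i ω) ⬝ᵥ (R (O l ω)).mulVec (v (O j ω))) μ := by
  have hint : ∀ r s : Fin k,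
      Integrable (fun ω => u (O i ω) r * v (O j ω) s * R (O l ω) r s) μ := by
    intro r s
    have I1 : IndepFun (fun ω => u (O i ω) r) (fun ω => v (O j ω) s) μ :=
      (hindep.indepFun hij).comp (hu r) (hv s)
    have I2 : IndepFun (fun ω => u (O i ω) r * v (O j ω) s) (fun ω => R (O l ω) r s) μ :=
      (hindep.indepFun_prodMk hOmeas i j l hil hjl).comp
        (((hu r).comp measurable_fst).mul ((hv s).comp measurable_snd)) (hRmeas r s)
    exact I2.integrable_mul (I1.integrable_mul (hui r) (hvi s)) (hRint r s)
  have hexp : (fun ω => u (O i ω) ⬝ᵥ (R (O l ω)).mulVec (v (O j ω))) =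
      fun ω => ∑ r, ∑ s, u (O i ω) r * v (O j ω) s * R (O l ω) r s := by
    funext ω
    simp only [dotProduct, mulVec, Finset.mul_sum]
    exact Finset.sum_congr rfl fun r _ => Finset.sum_congr rfl fun s _ => by ring
  rw [hexp]
  exact integrable_finset_sum _ fun r _ => integrable_finset_sum _ fun s _ => hint r s

theorem stmt8 {Ω α : Type*} [MeasurableSpace Ω] [MeasurableSpace α]
    (μ : Measure Ω) [IsProbabilityMeasure μ]
    {n k : ℕ} (hn : 3 ≤ n)
    (O : Fin n → Ω → α) (hOmeas : ∀ i, Measurable (O i))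
    (hindep : iIndepFun O μ)
    (hident : ∀ i j, IdentDistrib (O i) (O j) μ μ)
    (u v : α → Fin k → ℝ)
    (hu : ∀ l, Measurable fun x => u x l) (hv : ∀ l, Measurable fun x => v x l)
    (hu2 : ∀ i l, MemLp (fun ω => u (O i ω) l) 2 μ)
    (hv2 : ∀ i l, MemLp (fun ω => v (O i ω) l) 2 μ)
    (a b : Fin k → ℝ)
    (ha : ∀ i l, ∫ ω, u (O i ω) l ∂μ = a l) (hb : ∀ i l, ∫ ω, v (O i ω) l ∂μ = b l)
    (S : α → Matrix (Fin k) (Fin k) ℝ)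
    (hSmeas : ∀ l m, Measurable fun x => S x l m)
    (hSint : ∀ i l m, Integrable (fun ω => S (O i ω) l m) μ)
    (Sig : Matrix (Fin k) (Fin k) ℝ) (hSig : ∀ i l m, ∫ ω, S (O i ω) l m ∂μ = Sig l m)
    (hSigUnit : IsUnit Sig)
    (Shat : Matrix (Fin k) (Fin k) ℝ) (hShatUnit : IsUnit Shat) :
    let T : ℝ := ∫ ω, ((Nat.factorial (n - 3) : ℝ) / (Nat.factorial n : ℝ)) *
        ∑ p ∈ Finset.univ.filter
            (fun p : Fin n × Fin n × Fin n => p.1 ≠ p.2.1 ∧ p.1 ≠ p.2.2 ∧ p.2.1 ≠ p.2.2),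
          u (O p.1 ω) ⬝ᵥ
            (Shat⁻¹ - Shat⁻¹ * (S (O p.2.2 ω) - Shat) * Shat⁻¹).mulVec (v (O p.2.1 ω)) ∂μ
    |T - a ⬝ᵥ Sig⁻¹.mulVec b| ≤
      ‖Matrix.toEuclideanCLM (𝕜 := ℝ) Shat⁻¹‖ ^ 2 * ‖Matrix.toEuclideanCLM (𝕜 := ℝ) Sig⁻¹‖ *
        ‖Matrix.toEuclideanCLM (𝕜 := ℝ) (Shat - Sig)‖ ^ 2 *
        ‖(WithLp.equiv 2 (Fin k → ℝ)).symm a‖ * ‖(WithLp.equiv 2 (Fin k → ℝ)).symm b‖ := by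
  classical
  intro T
  set M : Matrix (Fin k) (Fin k) ℝ := Shat⁻¹ - Shat⁻¹ * (Sig - Shat) * Shat⁻¹ with hM
  set R : α → Matrix (Fin k) (Fin k) ℝ :=
    fun x => Shat⁻¹ - Shat⁻¹ * (S x - Shat) * Shat⁻¹ with hR
  -- entrywise formula
  have entry : ∀ (B : Matrix (Fin k) (Fin k) ℝ) (r s : Fin k),
      (Shat⁻¹ - Shat⁻¹ * (B - Shat) * Shat⁻¹) r s =
        Shat⁻¹ r s - ∑ d, ∑ c, Shat⁻¹ r c * (B c d - Shat c d) * Shat⁻¹ d s := by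
    intro B r s
    simp only [Matrix.sub_apply, Matrix.mul_apply, Finset.sum_mul]
  have hu1 : ∀ i r, Integrable (fun ω => u (O i ω) r) μ := fun i r =>
    (hu2 i r).integrable one_le_two
  have hv1 : ∀ i r, Integrable (fun ω => v (O i ω) r) μ := fun i r =>
    (hv2 i r).integrable one_le_two
  have hRmeas : ∀ r s, Measurable fun x => R x r s := by
    intro r s
    simp only [hR, entry]
    exact measurable_const.sub (Finset.measurable_sum _ fun d _ =>
      Finset.measurable_sum _ fun c _ =>
        (((hSmeas c d).sub measurable_const).const_mul _).mul_const _)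
  have hRint : ∀ (i0 : Fin n) r s, Integrable (fun ω => R (O i0 ω) r s) μ := by
    intro i0 r s
    simp only [hR, entry]
    exact (integrable_const _).sub (integrable_finset_sum _ fun d _ =>
      integrable_finset_sum _ fun c _ =>
        (((hSint i0 c d).sub (integrable_const _)).const_mul _).mul_const _)
  have hRbar : ∀ (i0 : Fin n) r s, ∫ ω, R (O i0 ω) r s ∂μ = M r s := by
    intro i0 r s
    have hterm : ∀ c d : Fin k,
        ∫ ω, Shat⁻¹ r c * (S (O i0 ω) c d - Shat c d) * Shat⁻¹ d s ∂μ =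
          Shat⁻¹ r c * (Sig c d - Shat c d) * Shat⁻¹ d s := by
      intro c d
      rw [MeasureTheory.integral_mul_const, MeasureTheory.integral_const_mul,
        integral_sub (hSint i0 c d) (integrable_const _), hSig, integral_const]
      simp
    have hSint2 : ∀ c d : Fin k,
        Integrable (fun ω => Shat⁻¹ r c * (S (O i0 ω) c d - Shat c d) * Shat⁻¹ d s) μ :=
      fun c d => (((hSint i0 c d).sub (integrable_const _)).const_mul _).mul_const _
    have hsumint : Integrable
        (fun ω => ∑ d, ∑ c, Shat⁻¹ r c * (S (O i0 ω) c d - Shat c d) * Shat⁻¹ d s) μ :=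
      integrable_finset_sum _ fun d _ => integrable_finset_sum _ fun c _ => hSint2 c d
    simp only [hR, entry, hM]
    rw [integral_sub (integrable_const _) hsumint, integral_const]
    simp only [probReal_univ, one_smul]
    congr 1
    rw [integral_finset_sum _ fun d _ => integrable_finset_sum _ fun c _ => hSint2 c d]
    refine Finset.sum_congr rfl fun d _ => ?_
    rw [integral_finset_sum _ fun c _ => hSint2 c d]
    exact Finset.sum_congr rfl fun c _ => hterm c d
  -- value of T
  set E : Finset (Fin n × Fin n × Fin n) := Finset.univ.filter
    (fun p : Fin n × Fin n × Fin n => p.1 ≠ p.2.1 ∧ p.1 ≠ p.2.2 ∧ p.2.1 ≠ p.2.2) with hE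
  have hfac : ((Nat.factorial (n - 3) : ℝ) / (Nat.factorial n : ℝ)) *
      ((n * ((n - 1) * (n - 2)) : ℕ) : ℝ) = 1 := by
    obtain ⟨m, rfl⟩ : ∃ m, n = m + 3 := ⟨n - 3, by omega⟩
    simpa using aux_fact (m := m)
  have hintp : ∀ p ∈ E, Integrable
      (fun ω => u (O p.1 ω) ⬝ᵥ (R (O p.2.2 ω)).mulVec (v (O p.2.1 ω))) μ := by
    intro p hp
    obtain ⟨-, h1, h2, h3⟩ := Finset.mem_filter.mp hp
    exact aux_bilin_int μ O hOmeas hindep h1 h2 h3 u v hu hv (hu1 _) (hv1 _)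
      R hRmeas (hRint _)
  have hval : ∀ p ∈ E, ∫ ω, u (O p.1 ω) ⬝ᵥ (R (O p.2.2 ω)).mulVec (v (O p.2.1 ω)) ∂μ =
      a ⬝ᵥ M.mulVec b := by
    intro p hp
    obtain ⟨-, h1, h2, h3⟩ := Finset.mem_filter.mp hp
    exact aux_bilin μ O hOmeas hindep h1 h2 h3 u v hu hv (hu1 _) (hv1 _) a b
      (ha _) (hb _) R hRmeas (hRint _) M (hRbar _)
  have hT : T = a ⬝ᵥ M.mulVec b := by
    calc T = ((Nat.factorial (n - 3) : ℝ) / (Nat.factorial n : ℝ)) *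
          ∫ ω, ∑ p ∈ E, u (O p.1 ω) ⬝ᵥ (R (O p.2.2 ω)).mulVec (v (O p.2.1 ω)) ∂μ :=
        MeasureTheory.integral_const_mul _ _
      _ = ((Nat.factorial (n - 3) : ℝ) / (Nat.factorial n : ℝ)) *
          ∑ p ∈ E, ∫ ω, u (O p.1 ω) ⬝ᵥ (R (O p.2.2 ω)).mulVec (v (O p.2.1 ω)) ∂μ := by
        rw [integral_finset_sum _ hintp]
      _ = ((Nat.factorial (n - 3) : ℝ) / (Nat.factorial n : ℝ)) *
          ∑ _p ∈ E, a ⬝ᵥ M.mulVec b := by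
        rw [Finset.sum_congr rfl hval]
      _ = (((Nat.factorial (n - 3) : ℝ) / (Nat.factorial n : ℝ)) * (E.card : ℝ)) *
          (a ⬝ᵥ M.mulVec b) := by
        rw [Finset.sum_const, nsmul_eq_mul]; ring
      _ = a ⬝ᵥ M.mulVec b := by
        rw [hE, aux_card, hfac, one_mul]
  -- the bound
  have hdet1 : IsUnit Sig.det := (Matrix.isUnit_iff_isUnit_det Sig).mp hSigUnit
  have hdet2 : IsUnit Shat.det := (Matrix.isUnit_iff_isUnit_det Shat).mp hShatUnit
  have key : M - Sig⁻¹ = -(Sig⁻¹ * (Shat - Sig) * Shat⁻¹ * (Shat - Sig) * Shat⁻¹) :=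
    aux_alg Sig Shat (Matrix.nonsing_inv_mul _ hdet1) (Matrix.mul_nonsing_inv _ hdet1)
      (Matrix.nonsing_inv_mul _ hdet2) (Matrix.mul_nonsing_inv _ hdet2)
  have hsub : a ⬝ᵥ M.mulVec b - a ⬝ᵥ Sig⁻¹.mulVec b = a ⬝ᵥ (M - Sig⁻¹).mulVec b := by
    simp only [Matrix.sub_mulVec, dotProduct_sub]
  have hnorm : ‖Matrix.toEuclideanCLM (𝕜 := ℝ)
        (-(Sig⁻¹ * (Shat - Sig) * Shat⁻¹ * (Shat - Sig) * Shat⁻¹))‖ ≤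
      ‖Matrix.toEuclideanCLM (𝕜 := ℝ) Shat⁻¹‖ ^ 2 * ‖Matrix.toEuclideanCLM (𝕜 := ℝ) Sig⁻¹‖ *
        ‖Matrix.toEuclideanCLM (𝕜 := ℝ) (Shat - Sig)‖ ^ 2 := by
    rw [map_neg, norm_neg, _root_.map_mul, _root_.map_mul, _root_.map_mul, _root_.map_mul]
    set A := Matrix.toEuclideanCLM (𝕜 := ℝ) Shat⁻¹
    set B := Matrix.toEuclideanCLM (𝕜 := ℝ) Sig⁻¹
    set Ee := Matrix.toEuclideanCLM (𝕜 := ℝ) (Shat - Sig)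
    calc ‖B * Ee * A * Ee * A‖ ≤ ‖B * Ee * A * Ee‖ * ‖A‖ := norm_mul_le _ _
      _ ≤ (‖B * Ee * A‖ * ‖Ee‖) * ‖A‖ :=
        mul_le_mul_of_nonneg_right (norm_mul_le _ _) (norm_nonneg _)
      _ ≤ ((‖B * Ee‖ * ‖A‖) * ‖Ee‖) * ‖A‖ :=
        mul_le_mul_of_nonneg_right
          (mul_le_mul_of_nonneg_right (norm_mul_le _ _) (norm_nonneg _)) (norm_nonneg _)
      _ ≤ (((‖B‖ * ‖Ee‖) * ‖A‖) * ‖Ee‖) * ‖A‖ :=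
        mul_le_mul_of_nonneg_right (mul_le_mul_of_nonneg_right
          (mul_le_mul_of_nonneg_right (norm_mul_le _ _) (norm_nonneg _)) (norm_nonneg _))
          (norm_nonneg _)
      _ = ‖A‖ ^ 2 * ‖B‖ * ‖Ee‖ ^ 2 := by ring
  rw [hT, hsub, key]
  calc |a ⬝ᵥ (-(Sig⁻¹ * (Shat - Sig) * Shat⁻¹ * (Shat - Sig) * Shat⁻¹)).mulVec b|
      ≤ ‖Matrix.toEuclideanCLM (𝕜 := ℝ)
          (-(Sig⁻¹ * (Shat - Sig) * Shat⁻¹ * (Shat - Sig) * Shat⁻¹))‖ *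
        ‖(WithLp.equiv 2 (Fin k → ℝ)).symm a‖ * ‖(WithLp.equiv 2 (Fin k → ℝ)).symm b‖ :=
        aux_opnorm _ _ _
    _ ≤ _ := by
        exact mul_le_mul_of_nonneg_right
          (mul_le_mul_of_nonneg_right hnorm (norm_nonneg _)) (norm_nonneg _)
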